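/- Vanishing diagonal mode: B(−m,m) = 0 for all m ∈ ℤ³, where B(l,m) = ∫_{B(0,2λπ)} dq ∫_{S²} dσ B(q,θ)[e^{i l·q⁺ + i m·q⁻} − e^{i q·m}]; consequently the spectral scheme ∂_t f̂_k = Σ_{l+m=k} f̂_l f̂_m B(l,m) conserves the zeroth Fourier mode f̂_0 (mass) in time. -/

import Mathlib

open MeasureTheory RealInnerProductSpace Real

noncomputable section

/-- The (surface) measure on the unit sphere of `ℝ³`. -/
def sphMeasure : Measure (Metric.sphere (0 : EuclideanSpace ℝ (Fin 3)) 1) :=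
  (volume : Measure (EuclideanSpace ℝ (Fin 3))).toSphere

/-- An integer vector of `ℤ³` regarded as a vector of `ℝ³`. -/
def iVec (l : Fin 3 → ℤ) : EuclideanSpace ℝ (Fin 3) := WithLp.toLp 2 (fun i => (l i : ℝ))

/-- The Boltzmann kernel modes
`B(l,m) = ∫_{B(0,2λπ)} dq ∫_{S²} dσ B(q,σ) [e^{i l·q⁺ + i m·q⁻} - e^{i q·m}]`,
where `q⁺ = (q + |q|σ)/2`, `q⁻ = (q - |q|σ)/2` and the (real, nonnegative) kernel
`Bk q σ` stands for `B(q,θ)` with `cos θ = q·σ/|q|`. -/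
def kernelMode (lam : ℝ) (Bk : EuclideanSpace ℝ (Fin 3) → EuclideanSpace ℝ (Fin 3) → ℝ)
    (l m : EuclideanSpace ℝ (Fin 3)) : ℂ :=
  ∫ q in Metric.ball (0 : EuclideanSpace ℝ (Fin 3)) (2 * lam * π),
    ∫ σ : Metric.sphere (0 : EuclideanSpace ℝ (Fin 3)) 1,
      (Bk q (σ : EuclideanSpace ℝ (Fin 3)) : ℂ) *
        (Complex.exp (Complex.I *
            ((⟪l, (1/2 : ℝ) • (q + ‖q‖ • (σ : EuclideanSpace ℝ (Fin 3)))⟫ +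
              ⟪m, (1/2 : ℝ) • (q - ‖q‖ • (σ : EuclideanSpace ℝ (Fin 3)))⟫ : ℝ) : ℂ)) -
          Complex.exp (Complex.I * ((⟪q, m⟫ : ℝ) : ℂ))) ∂sphMeasure


-- auxiliary material


namespace Stmt16Aux

abbrev E3 := EuclideanSpace ℝ (Fin 3)
abbrev Sph := Metric.sphere (0 : E3) 1

instance : IsFiniteMeasure sphMeasure := by unfold sphMeasure; infer_instance

lemma negSph_mem (x : Sph) : -(x : E3) ∈ Sph := by
  simpa [mem_sphere_zero_iff_norm] using x.2

def negS : Sph ≃ᵐ Sph where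
  toFun x := ⟨-(x : E3), negSph_mem x⟩
  invFun x := ⟨-(x : E3), negSph_mem x⟩
  left_inv x := by ext; simp
  right_inv x := by ext; simp
  measurable_toFun :=
    (Continuous.subtype_mk (continuous_neg.comp continuous_subtype_val) _).measurable
  measurable_invFun :=
    (Continuous.subtype_mk (continuous_neg.comp continuous_subtype_val) _).measurable

@[simp] lemma negS_coe (x : Sph) : (negS x : E3) = -(x : E3) := rfl

@[simp] lemma negS_negS (x : Sph) : negS (negS x) = x := by ext; simp

lemma sphMeasure_map_negS : sphMeasure.map negS = sphMeasure := by
  refine Measure.ext fun s hs => ?_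
  have hps : MeasurableSet (⇑negS ⁻¹' s) := negS.measurable hs
  rw [Measure.map_apply negS.measurable hs]
  show (volume : Measure E3).toSphere _ = (volume : Measure E3).toSphere _
  rw [Measure.toSphere_apply' _ hps, Measure.toSphere_apply' _ hs]
  congr 1
  have himg : (Subtype.val '' (⇑negS ⁻¹' s) : Set E3) = -(Subtype.val '' s) := by
    ext x
    simp only [Set.mem_image, Set.mem_preimage, Set.mem_neg]
    constructor
    · rintro ⟨y, hy, rfl⟩
      exact ⟨negS y, hy, by simp⟩
    · rintro ⟨z, hz, hzx⟩
      refine ⟨negS z, by simpa using hz, neg_eq_iff_eq_neg.mpr hzx⟩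
  rw [himg, Set.smul_neg, Measure.measure_neg]

/-- The rearrangement `((u, r), σ) ↦ ((-σ, r), -u)` as a measurable equiv. -/
def eEq : (Sph × Set.Ioi (0:ℝ)) × Sph ≃ᵐ (Sph × Set.Ioi (0:ℝ)) × Sph :=
  ((MeasurableEquiv.prodAssoc.trans
      ((MeasurableEquiv.refl Sph).prodCongr MeasurableEquiv.prodComm)).trans
    MeasurableEquiv.prodComm).trans
      ((negS.prodCongr (MeasurableEquiv.refl (Set.Ioi (0:ℝ)))).prodCongr negS)

@[simp] lemma eEq_apply (z : (Sph × Set.Ioi (0:ℝ)) × Sph) :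
    eEq z = ((negS z.2, z.1.2), negS z.1.1) := rfl

lemma measurePreserving_eEq :
    MeasurePreserving ⇑eEq
      ((sphMeasure.prod (Measure.volumeIoiPow (Module.finrank ℝ E3 - 1))).prod sphMeasure)
      ((sphMeasure.prod (Measure.volumeIoiPow (Module.finrank ℝ E3 - 1))).prod sphMeasure) := by
  set ν' := Measure.volumeIoiPow (Module.finrank ℝ E3 - 1)
  have mp_neg : MeasurePreserving ⇑negS sphMeasure sphMeasure :=
    ⟨negS.measurable, sphMeasure_map_negS⟩
  have mpA := measurePreserving_prodAssoc sphMeasure ν' sphMeasure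
  have mpB := (MeasurePreserving.id sphMeasure).prod
    (Measure.measurePreserving_swap (μ := ν') (ν := sphMeasure))
  have mpC := Measure.measurePreserving_swap (μ := sphMeasure) (ν := sphMeasure.prod ν')
  have mpN := (mp_neg.prod (MeasurePreserving.id ν')).prod mp_neg
  have hfun : ⇑eEq = (Prod.map (Prod.map ⇑negS id) ⇑negS) ∘ Prod.swap ∘
      (Prod.map id Prod.swap) ∘ ⇑(MeasurableEquiv.prodAssoc (α := Sph) (β := Set.Ioi (0:ℝ)) (γ := Sph)) := by
    funext z; rfl
  rw [hfun]
  exact mpN.comp (mpC.comp (mpB.comp mpA))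

/-- Key vanishing lemma. -/
lemma integral_pair_zero (R : ℝ) (Bk : E3 → E3 → ℝ) (β : ℝ → ℝ → ℝ)
    (hBk : ∀ q σ, Bk q σ = β ‖q‖ (⟪q, σ⟫ / ‖q‖)) (hBpos : ∀ q σ, 0 ≤ Bk q σ)
    (M : E3) (D : E3 × Sph → ℂ) (hDc : Continuous D)
    (hD : ∀ (q : E3) (τ : Sph),
      D (q, τ) = Complex.exp (-(Complex.I * ((‖q‖ * ⟪M, (τ : E3)⟫ : ℝ) : ℂ))) -
        Complex.exp (Complex.I * ((⟪q, M⟫ : ℝ) : ℂ)))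
    (h0 : Integrable (fun p : E3 × Sph => Bk p.1 (p.2 : E3) * ‖D p‖)
      ((volume.restrict (Metric.ball (0 : E3) R)).prod sphMeasure)) :
    ∫ q in Metric.ball (0 : E3) R,
      ∫ σ : Sph, (Bk q (σ : E3) : ℂ) * D (q, σ) ∂sphMeasure = 0 := by
  classical
  set μp := (volume.restrict (Metric.ball (0 : E3) R)).prod sphMeasure with hμp
  set f : E3 × Sph → ℂ := fun p => (Bk p.1 (p.2 : E3) : ℂ) * D p with hf
  -- measurability and integrability of f
  have heq : ∀ p, f p = ((Bk p.1 (p.2 : E3) * ‖D p‖ : ℝ) : ℂ) *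
      (D p / ((‖D p‖ : ℝ) : ℂ)) := by
    intro p
    by_cases h : D p = 0
    · simp [hf, h]
    · have habs : ((‖D p‖ : ℝ) : ℂ) ≠ 0 := by
        exact_mod_cast (norm_ne_zero_iff.mpr h)
      push_cast
      field_simp [hf]
      ring
  have hmeas : AEStronglyMeasurable f μp := by
    have h1 : AEStronglyMeasurable
        (fun p : E3 × Sph => ((Bk p.1 (p.2 : E3) * ‖D p‖ : ℝ) : ℂ)) μp :=
      Complex.continuous_ofReal.comp_aestronglyMeasurable h0.1
    have h2 : StronglyMeasurable (fun p : E3 × Sph => D p / ((‖D p‖ : ℝ) : ℂ)) :=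
      (hDc.measurable.div
        ((Complex.continuous_ofReal.comp (hDc.norm)).measurable)).stronglyMeasurable
    exact (h1.mul h2.aestronglyMeasurable).congr
      (Filter.Eventually.of_forall fun p => (heq p).symm)
  have hbound : ∀ p, ‖f p‖ ≤ ‖Bk p.1 (p.2 : E3) * ‖D p‖‖ := by
    intro p
    apply le_of_eq
    simp [hf, abs_mul, norm_mul,
      abs_of_nonneg (hBpos p.1 (p.2 : E3)),
      Real.norm_eq_abs]
  have hfi : Integrable f μp :=
    Integrable.mono' h0.norm hmeas (Filter.Eventually.of_forall hbound)
  have hrepr :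
      (∫ q in Metric.ball (0 : E3) R, ∫ σ : Sph, (Bk q (σ : E3) : ℂ) * D (q, σ) ∂sphMeasure)
        = ∫ z, f z ∂μp := (integral_prod f hfi).symm
  rw [hrepr]
  -- pass to indicator over the full product measure
  have hball : MeasurableSet (Metric.ball (0 : E3) R ×ˢ (Set.univ : Set Sph)) :=
    measurableSet_ball.prod MeasurableSet.univ
  set F : E3 × Sph → ℂ := (Metric.ball (0 : E3) R ×ˢ (Set.univ : Set Sph)).indicator f with hF
  have hrestr : μp = (volume.prod sphMeasure).restrict
      (Metric.ball (0 : E3) R ×ˢ (Set.univ : Set Sph)) := by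
    rw [hμp, ← Measure.prod_restrict, Measure.restrict_univ]
  have hind : ∫ z, f z ∂μp = ∫ z, F z ∂(volume.prod sphMeasure) := by
    rw [hrestr, hF, integral_indicator hball]
  rw [hind]
  -- now the symmetry argument
  have hA : MeasurableSet ({(0 : E3)}ᶜ : Set E3) := (measurableSet_singleton _).compl
  set A := ({(0 : E3)}ᶜ : Set E3)
  set ν' := Measure.volumeIoiPow (Module.finrank ℝ E3 - 1) with hν'
  have mpΦ : MeasurePreserving (⇑((homeomorphUnitSphereProd E3).toMeasurableEquiv))
      (volume.comap Subtype.val) (sphMeasure.prod ν') :=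
    (volume : Measure E3).measurePreserving_homeomorphUnitSphereProd
  haveI hsf : SFinite ((volume : Measure E3).comap (Subtype.val : A → E3)) := by
    have hcm : (volume : Measure E3).comap (Subtype.val : A → E3) =
        (sphMeasure.prod ν').map (⇑((homeomorphUnitSphereProd E3).toMeasurableEquiv).symm) := by
      rw [← mpΦ.map_eq, MeasurableEquiv.map_symm_map]
    rw [hcm]; infer_instance
  have mp_val : MeasurePreserving (Subtype.val : A → E3) (volume.comap Subtype.val) volume :=
    ⟨measurable_subtype_coe, by rw [map_comap_subtype_coe hA, restrict_compl_singleton]⟩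
  have mp1 : MeasurePreserving (Prod.map (Subtype.val : A → E3) (id : Sph → Sph))
      ((volume.comap Subtype.val).prod sphMeasure) (volume.prod sphMeasure) :=
    mp_val.prod (MeasurePreserving.id _)
  have emb1 : MeasurableEmbedding (Prod.map (Subtype.val : A → E3) (id : Sph → Sph)) :=
    (MeasurableEmbedding.subtype_coe hA).prodMap MeasurableEmbedding.id
  have s1 : (∫ x : A × Sph, F ((x.1 : E3), x.2) ∂((volume.comap Subtype.val).prod sphMeasure))
      = ∫ z, F z ∂(volume.prod sphMeasure) := mp1.integral_comp emb1 F
  have mp2 : MeasurePreserving (Prod.map (⇑(homeomorphUnitSphereProd E3)) (id : Sph → Sph))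
      ((volume.comap Subtype.val).prod sphMeasure) ((sphMeasure.prod ν').prod sphMeasure) :=
    mpΦ.prod (MeasurePreserving.id _)
  have emb2 : MeasurableEmbedding (Prod.map (⇑(homeomorphUnitSphereProd E3)) (id : Sph → Sph)) :=
    ((homeomorphUnitSphereProd E3).measurableEmbedding).prodMap MeasurableEmbedding.id
  set g : (Sph × Set.Ioi (0:ℝ)) × Sph → ℂ := fun z => F ((z.1.2 : ℝ) • (z.1.1 : E3), z.2) with hg
  have s2 : (∫ x : A × Sph, g (Prod.map (⇑(homeomorphUnitSphereProd E3)) id x)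
      ∂((volume.comap Subtype.val).prod sphMeasure))
      = ∫ z, g z ∂((sphMeasure.prod ν').prod sphMeasure) := mp2.integral_comp emb2 g
  have compat : ∀ x : A × Sph,
      g (Prod.map (⇑(homeomorphUnitSphereProd E3)) id x) = F ((x.1 : E3), x.2) := by
    rintro ⟨⟨q, hq⟩, σ⟩
    have hq0 : q ≠ 0 := hq
    simp only [hg, Prod.map, id]
    have hsm : (((homeomorphUnitSphereProd E3) ⟨q, hq⟩).2 : ℝ) •
        (((homeomorphUnitSphereProd E3) ⟨q, hq⟩).1 : E3) = q := by
      rw [homeomorphUnitSphereProd_apply_fst_coe, homeomorphUnitSphereProd_apply_snd_coe]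
      exact smul_inv_smul₀ (norm_ne_zero_iff.mpr hq0) q
    rw [hsm]
  have s12 : ∫ z, F z ∂(volume.prod sphMeasure)
      = ∫ z, g z ∂((sphMeasure.prod ν').prod sphMeasure) := by
    rw [← s1, ← s2]
    exact integral_congr_ae (Filter.Eventually.of_forall fun x => (compat x).symm)
  rw [s12]
  -- symmetry: g ∘ eEq = -g
  have s4 : ∀ z : (Sph × Set.Ioi (0:ℝ)) × Sph, g (eEq z) = -g z := by
    rintro ⟨⟨u, r⟩, σ⟩
    have hr : (0:ℝ) < r := r.2
    have hu : ‖(u : E3)‖ = 1 := mem_sphere_zero_iff_norm.mp u.2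
    have hσ : ‖(σ : E3)‖ = 1 := mem_sphere_zero_iff_norm.mp σ.2
    have hn1 : ‖(r : ℝ) • (u : E3)‖ = (r : ℝ) := by
      rw [norm_smul, hu, mul_one, Real.norm_eq_abs, abs_of_pos hr]
    have hn2 : ‖(r : ℝ) • (-(σ : E3))‖ = (r : ℝ) := by
      rw [norm_smul, norm_neg, hσ, mul_one, Real.norm_eq_abs, abs_of_pos hr]
    simp only [hg, eEq_apply, negS_coe]
    by_cases hmem : (r : ℝ) < R
    · have hm1 : ((r : ℝ) • (-(σ : E3)), negS u) ∈
          Metric.ball (0 : E3) R ×ˢ (Set.univ : Set Sph) := by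
        refine ⟨?_, trivial⟩
        rw [Metric.mem_ball, dist_zero_right, hn2]; exact hmem
      have hm2 : ((r : ℝ) • (u : E3), σ) ∈
          Metric.ball (0 : E3) R ×ˢ (Set.univ : Set Sph) := by
        refine ⟨?_, trivial⟩
        rw [Metric.mem_ball, dist_zero_right, hn1]; exact hmem
      rw [hF, Set.indicator_of_mem hm1, Set.indicator_of_mem hm2]
      -- now the pointwise identity for f
      have hBkeq : Bk ((r : ℝ) • (-(σ : E3))) ((negS u : Sph) : E3)
          = Bk ((r : ℝ) • (u : E3)) (σ : E3) := by
        rw [hBk, hBk, hn1, hn2]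
        congr 1
        rw [negS_coe]
        rw [inner_smul_left, inner_smul_left]
        simp only [inner_neg_neg]
        rw [real_inner_comm]
      have hDeq : D ((r : ℝ) • (-(σ : E3)), negS u) = -D ((r : ℝ) • (u : E3), σ) := by
        rw [hD, hD, hn1, hn2]
        have e1 : ⟪M, ((negS u : Sph) : E3)⟫ = -⟪M, (u : E3)⟫ := by
          rw [negS_coe, inner_neg_right]
        have e2 : ⟪(r : ℝ) • (-(σ : E3)), M⟫ = -((r : ℝ) * ⟪M, (σ : E3)⟫) := by
          rw [real_inner_smul_left, inner_neg_left, real_inner_comm]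
          ring
        have e3 : ⟪(r : ℝ) • (u : E3), M⟫ = (r : ℝ) * ⟪M, (u : E3)⟫ := by
          rw [real_inner_smul_left, real_inner_comm]
        rw [e1, e2, e3]
        push_cast
        ring_nf
      simp only [hf]
      rw [hBkeq, hDeq]
      ring
    · have hm1 : ((r : ℝ) • (-(σ : E3)), negS u) ∉
          Metric.ball (0 : E3) R ×ˢ (Set.univ : Set Sph) := by
        rintro ⟨h1, -⟩
        rw [Metric.mem_ball, dist_zero_right, hn2] at h1
        exact hmem h1
      have hm2 : ((r : ℝ) • (u : E3), σ) ∉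
          Metric.ball (0 : E3) R ×ˢ (Set.univ : Set Sph) := by
        rintro ⟨h1, -⟩
        rw [Metric.mem_ball, dist_zero_right, hn1] at h1
        exact hmem h1
      rw [hF, Set.indicator_of_notMem hm1, Set.indicator_of_notMem hm2, neg_zero]
  have s3 : (∫ z, g (eEq z) ∂((sphMeasure.prod ν').prod sphMeasure))
      = ∫ z, g z ∂((sphMeasure.prod ν').prod sphMeasure) :=
    measurePreserving_eEq.integral_comp eEq.measurableEmbedding g
  have hneg : (∫ z, g z ∂((sphMeasure.prod ν').prod sphMeasure))
      = -∫ z, g z ∂((sphMeasure.prod ν').prod sphMeasure) := by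
    conv_lhs => rw [← s3]
    rw [← integral_neg]
    exact integral_congr_ae (Filter.Eventually.of_forall fun z => s4 z)
  have h2 : (2 : ℂ) * ∫ z, g z ∂((sphMeasure.prod ν').prod sphMeasure) = 0 := by
    linear_combination hneg
  exact (mul_eq_zero.mp h2).resolve_left two_ne_zero

end Stmt16Aux

/-- Vanishing diagonal mode: `B(-m,m) = 0` for all `m ∈ ℤ³`, for a
kernel `B(q,θ)` depending only on `|q|` and `cos θ = q·σ/|q|` and absolutely
integrable; consequently the spectral scheme
`∂_t f̂_k = Σ_{l+m=k} f̂_l f̂_m B(l,m)` conserves the zeroth Fourier mode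
`f̂_0` (the mass) in time. -/
theorem stmt16 (lam : ℝ) (hlam : 0 < lam)
    (Bk : EuclideanSpace ℝ (Fin 3) → EuclideanSpace ℝ (Fin 3) → ℝ)
    (β : ℝ → ℝ → ℝ)
    (hBk : ∀ q σ, Bk q σ = β ‖q‖ (⟪q, σ⟫ / ‖q‖))
    (hBpos : ∀ q σ, 0 ≤ Bk q σ)
    (hint : ∀ l m : Fin 3 → ℤ,
      Integrable
        (fun p : EuclideanSpace ℝ (Fin 3) ×
            Metric.sphere (0 : EuclideanSpace ℝ (Fin 3)) 1 =>
          Bk p.1 (p.2 : EuclideanSpace ℝ (Fin 3)) *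
            ‖(Complex.exp (Complex.I *
                  ((⟪iVec l, (1/2 : ℝ) • (p.1 + ‖p.1‖ • (p.2 : EuclideanSpace ℝ (Fin 3)))⟫ +
                    ⟪iVec m, (1/2 : ℝ) • (p.1 - ‖p.1‖ • (p.2 : EuclideanSpace ℝ (Fin 3)))⟫ : ℝ) : ℂ)) -
                Complex.exp (Complex.I * ((⟪p.1, iVec m⟫ : ℝ) : ℂ)))‖)
        ((volume.restrict (Metric.ball (0 : EuclideanSpace ℝ (Fin 3)) (2 * lam * π))).prod
          sphMeasure)) :
    (∀ m : Fin 3 → ℤ, kernelMode lam Bk (iVec (-m)) (iVec m) = 0) ∧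
    ∀ (fh : ℝ → (Fin 3 → ℤ) → ℂ) (N : ℕ),
      (∀ t : ℝ, HasDerivAt (fun s => fh s 0)
          (∑ m ∈ Finset.Icc (fun _ => -(N : ℤ)) (fun _ => (N : ℤ)),
            fh t (-m) * fh t m * kernelMode lam Bk (iVec (-m)) (iVec m)) t) →
      ∀ t : ℝ, fh t 0 = fh 0 0 := by
  have key : ∀ m : Fin 3 → ℤ, kernelMode lam Bk (iVec (-m)) (iVec m) = 0 := by
    intro m
    set D : Stmt16Aux.E3 × Stmt16Aux.Sph → ℂ := fun p =>
      Complex.exp (Complex.I *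
          ((⟪iVec (-m), (1/2 : ℝ) • (p.1 + ‖p.1‖ • (p.2 : Stmt16Aux.E3))⟫ +
            ⟪iVec m, (1/2 : ℝ) • (p.1 - ‖p.1‖ • (p.2 : Stmt16Aux.E3))⟫ : ℝ) : ℂ)) -
        Complex.exp (Complex.I * ((⟪p.1, iVec m⟫ : ℝ) : ℂ)) with hDdef
    have hneg : iVec (-m) = -iVec m := by
      ext i
      show ((((-m) i : ℤ)) : ℝ) = -((m i : ℤ) : ℝ)
      rw [Pi.neg_apply]
      push_cast
      ring
    have hDc : Continuous D := by
      rw [hDdef]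
      have hc1 : Continuous (fun p : Stmt16Aux.E3 × Stmt16Aux.Sph =>
          (⟪iVec (-m), (1/2 : ℝ) • (p.1 + ‖p.1‖ • (p.2 : Stmt16Aux.E3))⟫ +
            ⟪iVec m, (1/2 : ℝ) • (p.1 - ‖p.1‖ • (p.2 : Stmt16Aux.E3))⟫ : ℝ)) := by
        apply Continuous.add
        · exact Continuous.inner continuous_const (by fun_prop)
        · exact Continuous.inner continuous_const (by fun_prop)
      have hc2 : Continuous (fun p : Stmt16Aux.E3 × Stmt16Aux.Sph => (⟪p.1, iVec m⟫ : ℝ)) :=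
        Continuous.inner continuous_fst continuous_const
      exact (Complex.continuous_exp.comp
          (continuous_const.mul (Complex.continuous_ofReal.comp hc1))).sub
        (Complex.continuous_exp.comp
          (continuous_const.mul (Complex.continuous_ofReal.comp hc2)))
    have hform : ∀ (q : Stmt16Aux.E3) (τ : Stmt16Aux.Sph),
        D (q, τ) = Complex.exp (-(Complex.I * ((‖q‖ * ⟪iVec m, (τ : Stmt16Aux.E3)⟫ : ℝ) : ℂ))) -
          Complex.exp (Complex.I * ((⟪q, iVec m⟫ : ℝ) : ℂ)) := by
      intro q τ
      have hsum : (⟪iVec (-m), (1/2 : ℝ) • (q + ‖q‖ • (τ : Stmt16Aux.E3))⟫ +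
          ⟪iVec m, (1/2 : ℝ) • (q - ‖q‖ • (τ : Stmt16Aux.E3))⟫ : ℝ)
          = -(‖q‖ * ⟪iVec m, (τ : Stmt16Aux.E3)⟫) := by
        rw [hneg, inner_neg_left]
        simp only [real_inner_smul_right, inner_add_right, inner_sub_right]
        ring
      rw [hDdef]
      simp only [hsum, Complex.ofReal_neg]
      ring_nf
    have h0 : Integrable
        (fun p : Stmt16Aux.E3 × Stmt16Aux.Sph => Bk p.1 (p.2 : Stmt16Aux.E3) * ‖D p‖)
        ((volume.restrict (Metric.ball (0 : Stmt16Aux.E3) (2 * lam * π))).prod sphMeasure) :=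
      hint (-m) m
    have hz := Stmt16Aux.integral_pair_zero (2 * lam * π) Bk β hBk hBpos (iVec m) D hDc hform h0
    unfold kernelMode
    exact hz
  refine ⟨key, ?_⟩
  intro fh N hderiv t
  have hd : ∀ s : ℝ, HasDerivAt (fun s => fh s 0) 0 s := by
    intro s
    have h := hderiv s
    have hsum0 : (∑ m ∈ Finset.Icc (fun _ => -(N : ℤ)) (fun _ => (N : ℤ)),
        fh s (-m) * fh s m * kernelMode lam Bk (iVec (-m)) (iVec m)) = 0 :=
      Finset.sum_eq_zero fun m _ => by rw [key m, mul_zero]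
    rwa [hsum0] at h
  exact is_const_of_deriv_eq_zero (fun s => (hd s).differentiableAt)
    (fun s => (hd s).deriv) t 0

end
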